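/- Let n, m be coprime integers with 1 < n < m, let r ≥ 1, and let Γ ⊆ (ℕ ∪ {∞})^r be the tropical semiring generated by v_1 = (n,…,n), v_2 = (m,…,m), and w_1, …, w_r where (w_i)_i = ∞ and (w_i)_j = nm for j ≠ i. Let S = ⟨n,m⟩ = { an + bm : a,b ∈ ℕ } be the numerical semigroup generated by n and m. Then for any k ∈ S with cnm ≤ k < (c+1)nm for some 0 ≤ c ≤ r−1, and any nonempty J ⊆ {1,…,r}, the J-fiber F_J(k̄) of k̄ = (k,…,k) with respect to Γ is nonempty if and only if: #J ≥ r − c when k − cnm ∈ S, and #J ≥ r − (c−1) when k − cnm ∉ S. -/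

import Mathlib

/-- The tropical sub-semiring of `(ℕ∪{∞})^r` generated by a set `G`:
the smallest subset containing `0` and `G`, closed under componentwise
addition and componentwise minimum. -/
def tropGen {r : ℕ} (G : Set (Fin r → ℕ∞)) : Set (Fin r → ℕ∞) :=
  ⋂₀ {S : Set (Fin r → ℕ∞) | 0 ∈ S ∧ G ⊆ S ∧
      (∀ a ∈ S, ∀ b ∈ S, a + b ∈ S) ∧
      (∀ a ∈ S, ∀ b ∈ S, (fun i => min (a i) (b i)) ∈ S)}

/-- Generators of the value semiring of a plane curve with `r` branches,
each with semigroup `⟨n,m⟩` and pairwise intersection multiplicities `nm`: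
`v₁ = (n,…,n)`, `v₂ = (m,…,m)`, and `w_i` with `(w_i)_i = ∞`, `(w_i)_j = nm`. -/
def genNM (n m r : ℕ) : Set (Fin r → ℕ∞) :=
  {fun _ => (n : ℕ∞)} ∪ {fun _ => (m : ℕ∞)} ∪
    Set.range (fun i : Fin r => fun j : Fin r =>
      if j = i then (⊤ : ℕ∞) else ((n * m : ℕ) : ℕ∞))

namespace FiberNM

variable {r : ℕ} {G : Set (Fin r → ℕ∞)}

lemma zero_mem : (0 : Fin r → ℕ∞) ∈ tropGen G :=
  Set.mem_sInter.mpr fun _ hS => hS.1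

lemma gen_mem {x : Fin r → ℕ∞} (hx : x ∈ G) : x ∈ tropGen G :=
  Set.mem_sInter.mpr fun _ hS => hS.2.1 hx

lemma add_mem {x y : Fin r → ℕ∞} (hx : x ∈ tropGen G) (hy : y ∈ tropGen G) :
    x + y ∈ tropGen G :=
  Set.mem_sInter.mpr fun S hS => hS.2.2.1 x (hx S hS) y (hy S hS)

lemma tropGen_subset {Q : Set (Fin r → ℕ∞)} (h0 : 0 ∈ Q) (hG : G ⊆ Q)
    (hadd : ∀ a ∈ Q, ∀ b ∈ Q, a + b ∈ Q)
    (hmin : ∀ a ∈ Q, ∀ b ∈ Q, (fun i => min (a i) (b i)) ∈ Q) :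
    tropGen G ⊆ Q :=
  Set.sInter_subset_of_mem ⟨h0, hG, hadd, hmin⟩

def pureE (n m : ℕ) {r : ℕ} (a b : ℕ) (c : Fin r → ℕ) : Fin r → ℕ∞ :=
  fun i => if c i ≠ 0 then ⊤ else ((a * n + b * m + (∑ j, c j) * (n * m) : ℕ) : ℕ∞)

lemma pure_add (n m a₁ b₁ a₂ b₂ : ℕ) (c₁ c₂ : Fin r → ℕ) :
    pureE n m a₁ b₁ c₁ + pureE n m a₂ b₂ c₂
      = pureE n m (a₁ + a₂) (b₁ + b₂) (c₁ + c₂) := by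
  funext i
  simp only [pureE, Pi.add_apply]
  rcases eq_or_ne (c₁ i) 0 with h1 | h1 <;> rcases eq_or_ne (c₂ i) 0 with h2 | h2 <;>
    simp [h1, h2, Finset.sum_add_distrib] <;> push_cast <;> ring

variable {n m : ℕ}

lemma v1_mem : (fun _ : Fin r => (n : ℕ∞)) ∈ genNM n m r := Or.inl (Or.inl rfl)
lemma v2_mem : (fun _ : Fin r => (m : ℕ∞)) ∈ genNM n m r := Or.inl (Or.inr rfl)
lemma w_mem (j : Fin r) :
    (fun j' : Fin r => if j' = j then (⊤ : ℕ∞) else ((n * m : ℕ) : ℕ∞)) ∈ genNM n m r :=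
  Or.inr ⟨j, rfl⟩

lemma const_add (x y : ℕ) :
    (fun _ : Fin r => ((x + y : ℕ) : ℕ∞)) = (fun _ => (x : ℕ∞)) + fun _ => (y : ℕ∞) := by
  funext i; push_cast; rfl

lemma const_mul_mem {x : ℕ} (hx : (fun _ : Fin r => (x : ℕ∞)) ∈ tropGen (genNM n m r)) :
    ∀ a : ℕ, (fun _ : Fin r => ((a * x : ℕ) : ℕ∞)) ∈ tropGen (genNM n m r) := by
  intro a
  induction a with
  | zero => simpa [Pi.zero_def] using (zero_mem : (0 : Fin r → ℕ∞) ∈ tropGen (genNM n m r))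
  | succ a ih =>
      have : (a + 1) * x = a * x + x := by ring
      rw [this, const_add]
      exact add_mem ih hx

lemma const_mem (a b : ℕ) :
    (fun _ : Fin r => ((a * n + b * m : ℕ) : ℕ∞)) ∈ tropGen (genNM n m r) := by
  rw [const_add]
  exact add_mem (const_mul_mem (gen_mem v1_mem) a) (const_mul_mem (gen_mem v2_mem) b)

lemma pure_mem : ∀ (N a b : ℕ) (c : Fin r → ℕ), (∑ j, c j) = N →
    pureE n m a b c ∈ tropGen (genNM n m r) := by
  intro N
  induction N with
  | zero =>
      intro a b c hc
      have hc0 : ∀ i, c i = 0 := by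
        intro i
        have := (Finset.sum_eq_zero_iff.mp hc) i (Finset.mem_univ i)
        exact this
      have : pureE n m a b c = fun _ : Fin r => ((a * n + b * m : ℕ) : ℕ∞) := by
        funext i; simp [pureE, hc0, hc]
      rw [this]; exact const_mem a b
  | succ N ih =>
      intro a b c hc
      have hex : ∃ j, c j ≠ 0 := by
        by_contra h
        push_neg at h
        simp [h] at hc
      obtain ⟨j, hj⟩ := hex
      set c' := Function.update c j (c j - 1) with hc'def
      have hsum : ∑ i, c' i = N := by
        have h1 : ∑ i, c' i = (c j - 1) + ∑ i ∈ Finset.univ \ {j}, c i :=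
          Finset.sum_update_of_mem (Finset.mem_univ j) c (c j - 1)
        have h2 : c j + ∑ i ∈ Finset.univ \ {j}, c i = N + 1 := by
          rw [← Finset.erase_eq, Finset.add_sum_erase _ _ (Finset.mem_univ j)]
          exact hc
        omega
      have hdec : pureE n m a b c
          = pureE n m a b c' + fun j' : Fin r => if j' = j then (⊤ : ℕ∞)
              else ((n * m : ℕ) : ℕ∞) := by
        funext i
        rcases eq_or_ne i j with rfl | hij
        · simp [pureE, hj, Pi.add_apply]
        · have hci' : c' i = c i := Function.update_of_ne hij _ _
          rcases eq_or_ne (c i) 0 with h0 | h0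
          · simp only [pureE, Pi.add_apply, hci', h0, if_neg, ne_eq,
              not_true_eq_false, not_not]
            simp [h0, hij, hsum, hc]
            push_cast
            ring
          · simp [pureE, Pi.add_apply, hci', h0, hij]
      rw [hdec]
      exact add_mem (ih a b c' hsum) (gen_mem (w_mem j))

end FiberNM

namespace FiberNM

lemma key {n m r : ℕ} :
    ∀ δ ∈ tropGen (genNM n m r), ∀ j : Fin r,
      ∃ a b : ℕ, ∃ c : Fin r → ℕ,
        pureE n m a b c j = δ j ∧ ∀ i, δ i ≤ pureE n m a b c i := by
  have hQ := tropGen_subset (G := genNM n m r)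
    (Q := {δ | ∀ j : Fin r, ∃ a b : ℕ, ∃ c : Fin r → ℕ,
        pureE n m a b c j = δ j ∧ ∀ i, δ i ≤ pureE n m a b c i}) ?_ ?_ ?_ ?_
  · exact fun δ hδ => hQ hδ
  · -- 0 ∈ Q
    intro j
    refine ⟨0, 0, 0, ?_, ?_⟩ <;> simp [pureE]
  · -- generators
    rintro x ((rfl | rfl) | ⟨i₀, rfl⟩)
    · intro j
      refine ⟨1, 0, 0, ?_, ?_⟩ <;> simp [pureE]
    · intro j
      refine ⟨0, 1, 0, ?_, ?_⟩ <;> simp [pureE]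
    · intro j
      refine ⟨0, 0, fun j' => if j' = i₀ then 1 else 0, ?_, ?_⟩
      · by_cases h : j = i₀ <;> simp [pureE, h]
      · intro i
        by_cases h : i = i₀ <;> simp [pureE, h]
  · -- add
    rintro δ₁ h1 δ₂ h2 j
    obtain ⟨a₁, b₁, c₁, he1, hl1⟩ := h1 j
    obtain ⟨a₂, b₂, c₂, he2, hl2⟩ := h2 j
    refine ⟨a₁ + a₂, b₁ + b₂, c₁ + c₂, ?_, ?_⟩
    · rw [← pure_add, Pi.add_apply, he1, he2]; rfl
    · intro i
      rw [← pure_add, Pi.add_apply]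
      exact add_le_add (hl1 i) (hl2 i)
  · -- min
    rintro δ₁ h1 δ₂ h2 j
    rcases le_total (δ₁ j) (δ₂ j) with hle | hle
    · obtain ⟨a, b, c, he, hl⟩ := h1 j
      exact ⟨a, b, c, by simp [he, min_eq_left hle],
        fun i => le_trans (min_le_left _ _) (hl i)⟩
    · obtain ⟨a, b, c, he, hl⟩ := h2 j
      exact ⟨a, b, c, by simp [he, min_eq_right hle],
        fun i => le_trans (min_le_right _ _) (hl i)⟩

end FiberNM

namespace FiberNM

lemma NT {n m : ℕ} (hn : 0 < n) (hm : 0 < m) (a b c : ℕ)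
    (hlo : c * (n * m) ≤ a * n + b * m) :
    ∃ a₀ b₀ : ℕ, a * n + b * m = a₀ * n + b₀ * m + (c - 1) * (n * m) := by
  rcases Nat.eq_zero_or_pos c with rfl | hc
  · exact ⟨a, b, by simp⟩
  obtain ⟨c', rfl⟩ : ∃ c', c = c' + 1 := ⟨c - 1, by omega⟩
  set a₀ := a % m with ha₀def
  set B := b + (a / m) * n with hBdef
  have hrep : a * n + b * m = a₀ * n + B * m := by
    conv_lhs => rw [← Nat.div_add_mod a m]
    ring
  have ha₀ : a₀ < m := Nat.mod_lt _ hm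
  have hB : c' * n < B := by
    by_contra h
    push_neg at h
    have h2 : (a₀ + 1) * n ≤ m * n := Nat.mul_le_mul_right n ha₀
    have h3 : B * m ≤ (c' * n) * m := Nat.mul_le_mul_right m h
    have hlo' : (c' + 1) * (n * m) ≤ a₀ * n + B * m := hrep ▸ hlo
    nlinarith
  obtain ⟨e, he⟩ : ∃ e, B = c' * n + e := ⟨B - c' * n, by omega⟩
  refine ⟨a₀, e, ?_⟩
  rw [hrep, he]
  simp only [Nat.add_sub_cancel]
  ring

end FiberNM

open FiberNM

/-- The fiber criterion for the value semiring of `r` branches with semigroup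
`⟨n,m⟩` and pairwise intersection multiplicity `nm`: for `k ∈ ⟨n,m⟩` with
`cnm ≤ k < (c+1)nm`, `0 ≤ c ≤ r−1`, the `J`-fiber of `k̄` is nonempty iff
`#J ≥ r − c` when `k − cnm ∈ ⟨n,m⟩`, and `#J ≥ r − (c−1)` otherwise. -/
theorem fiber_nonempty_iff_nm (n m r : ℕ) (hn : 1 < n) (hnm : n < m)
    (hcop : Nat.Coprime n m) (hr : 1 ≤ r) (k c : ℕ)
    (hk : ∃ a b : ℕ, k = a * n + b * m) (hc : c ≤ r - 1)
    (hlo : c * (n * m) ≤ k) (hhi : k < (c + 1) * (n * m))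
    (J : Finset (Fin r)) (hJ : J.Nonempty) :
    ((∃ a b : ℕ, k - c * (n * m) = a * n + b * m) →
      ((∃ δ ∈ tropGen (genNM n m r),
          (∀ j ∈ J, δ j = (k : ℕ∞)) ∧ (∀ i ∉ J, (k : ℕ∞) < δ i)) ↔
        r - c ≤ J.card)) ∧
    ((¬ ∃ a b : ℕ, k - c * (n * m) = a * n + b * m) →
      ((∃ δ ∈ tropGen (genNM n m r),
          (∀ j ∈ J, δ j = (k : ℕ∞)) ∧ (∀ i ∉ J, (k : ℕ∞) < δ i)) ↔
        r - (c - 1) ≤ J.card)) := by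
  have hn0 : 0 < n := by omega
  have hm0 : 0 < m := by omega
  have hJr : J.card ≤ r := by
    simpa using J.card_le_univ
  -- forward: a nonempty fiber yields a representation k = a n + b m + t (nm)
  -- with r - #J ≤ t
  have forward : (∃ δ ∈ tropGen (genNM n m r),
      (∀ j ∈ J, δ j = (k : ℕ∞)) ∧ (∀ i ∉ J, (k : ℕ∞) < δ i)) →
      ∃ a b t : ℕ, r - J.card ≤ t ∧ k = a * n + b * m + t * (n * m) := by
    rintro ⟨δ, hδ, hJeq, hJgt⟩
    obtain ⟨j₀, hj₀⟩ := hJ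
    obtain ⟨a, b, cf, he, hl⟩ := key δ hδ j₀
    rw [hJeq j₀ hj₀] at he
    have hcj₀ : cf j₀ = 0 := by
      by_contra h
      rw [pureE, if_pos h] at he
      exact (ENat.top_ne_coe k) he
    have hkval : k = a * n + b * m + (∑ j, cf j) * (n * m) := by
      rw [pureE, if_neg (by simp [hcj₀])] at he
      exact_mod_cast he.symm
    have hsupp : ∀ i ∉ J, cf i ≠ 0 := by
      intro i hi h0
      have hpi : pureE n m a b cf i = (k : ℕ∞) := by
        rw [pureE, if_neg (by simp [h0])]
        exact_mod_cast hkval.symm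
      have := lt_of_lt_of_le (hJgt i hi) (hl i)
      rw [hpi] at this
      exact lt_irrefl _ this
    refine ⟨a, b, ∑ j, cf j, ?_, hkval⟩
    have h1 : Jᶜ ⊆ Finset.univ.filter fun i => cf i ≠ 0 := by
      intro i hi
      simp only [Finset.mem_filter, Finset.mem_univ, true_and]
      exact hsupp i (by simpa using hi)
    have h2 : (Finset.univ.filter fun i => cf i ≠ 0).card ≤ ∑ j, cf j := by
      rw [Finset.card_eq_sum_ones]
      refine le_trans (Finset.sum_le_sum fun i hi => ?_)
        (Finset.sum_le_sum_of_subset (Finset.filter_subset _ _))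
      exact Nat.one_le_iff_ne_zero.mpr (Finset.mem_filter.mp hi).2
    have h3 : Jᶜ.card = r - J.card := by
      rw [Finset.card_compl, Fintype.card_fin]
    calc r - J.card = Jᶜ.card := h3.symm
      _ ≤ _ := Finset.card_le_card h1
      _ ≤ _ := h2
  -- backward: a representation k = a n + b m + (r - #J)(nm) yields a fiber element
  have backward : ∀ a b : ℕ, k = a * n + b * m + (r - J.card) * (n * m) →
      (∃ δ ∈ tropGen (genNM n m r),
        (∀ j ∈ J, δ j = (k : ℕ∞)) ∧ (∀ i ∉ J, (k : ℕ∞) < δ i)) := by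
    intro a b hab
    set cf : Fin r → ℕ := fun i => if i ∈ J then 0 else 1 with hcf
    have hsum : ∑ j, cf j = r - J.card := by
      have h1 : ∑ i, cf i = (Finset.univ.filter fun i => i ∉ J).card := by
        rw [Finset.card_eq_sum_ones, Finset.sum_filter]
        refine Finset.sum_congr rfl fun i _ => ?_
        by_cases h : i ∈ J <;> simp [hcf, h]
      have h2 : (Finset.univ.filter fun i => i ∉ J) = Jᶜ := by
        ext i; simp
      rw [h1, h2, Finset.card_compl, Fintype.card_fin]
    refine ⟨pureE n m a b cf, pure_mem _ a b cf rfl, ?_, ?_⟩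
    · intro j hj
      rw [pureE, if_neg (by simp [hcf, hj]), hsum]
      exact_mod_cast hab.symm
    · intro i hi
      rw [pureE, if_pos (by simp [hcf, hi])]
      exact lt_of_le_of_ne le_top (ENat.coe_ne_top k)
  constructor
  · -- case k - c nm ∈ S
    rintro ⟨a, b, hab⟩
    have hab' : k = a * n + b * m + c * (n * m) := by
      omega
    constructor
    · intro hfib
      obtain ⟨a', b', t, hle, heq⟩ := forward hfib
      have ht : t ≤ c := by
        have h1 : t * (n * m) ≤ k := by omega
        have h2 : t * (n * m) < (c + 1) * (n * m) := lt_of_le_of_lt h1 hhi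
        exact Nat.lt_succ_iff.mp (Nat.lt_of_mul_lt_mul_right h2)
      omega
    · intro hcard
      have ht : r - J.card ≤ c := by omega
      obtain ⟨d, hd⟩ : ∃ d, c = (r - J.card) + d := ⟨c - (r - J.card), by omega⟩
      refine backward (a + d * m) b ?_
      rw [hab', hd]; ring
  · -- case k - c nm ∉ S
    intro hnS
    have hc1 : 1 ≤ c := by
      by_contra h
      have hc0 : c = 0 := by omega
      obtain ⟨a, b, hab⟩ := hk
      exact hnS ⟨a, b, by simp [hc0, hab]⟩
    obtain ⟨a, b, hab⟩ := hk
    obtain ⟨a₀, b₀, hrep⟩ := NT hn0 hm0 a b c (hab ▸ hlo)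
    have hk' : k = a₀ * n + b₀ * m + (c - 1) * (n * m) := by rw [hab, hrep]
    constructor
    · intro hfib
      obtain ⟨a', b', t, hle, heq⟩ := forward hfib
      have ht : t ≤ c := by
        have h1 : t * (n * m) ≤ k := by omega
        have h2 : t * (n * m) < (c + 1) * (n * m) := lt_of_le_of_lt h1 hhi
        exact Nat.lt_succ_iff.mp (Nat.lt_of_mul_lt_mul_right h2)
      have htc : t ≠ c := by
        rintro rfl
        exact hnS ⟨a', b', by omega⟩
      omega
    · intro hcard
      have ht : r - J.card ≤ c - 1 := by omega
      obtain ⟨d, hd⟩ : ∃ d, c - 1 = (r - J.card) + d := ⟨(c - 1) - (r - J.card), by omega⟩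
      refine backward (a₀ + d * m) b₀ ?_
      rw [hk', hd]; ring
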